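/- For the two-vertex spatial Moran process with c := w₁/w₂ and stationary selection m = 1/(c+1), the fixation probability starting from any mixture α = (a,1−a) over the single-mutant states equals r/(r+1) = (1 − 1/r)/(1 − 1/r²) for r ≠ 1 (and 1/2 for r = 1). -/

import Mathlib

/-- For the two-vertex spatial Moran process with `c := w₁/w₂` and stationary
selection `m = 1/(c+1)`, the fixation probability
`F(m,a) = r·a·(1−m)/(m·c + r(1−m)) + r·m·(1−a)/((1−m)/c + r·m)` starting from any mixture
`α = (a, 1−a)` over the single-mutant states equals `r/(r+1)` — which equals
`(1 − 1/r)/(1 − 1/r²)` for `r ≠ 1`, and `1/2` for `r = 1`. -/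
theorem twoVertex_stationary_moran_fixation (c r a m : ℝ)
    (hc : 0 < c) (hr : 0 < r) (ha : a ∈ Set.Icc (0 : ℝ) 1)
    (hm : m = 1 / (c + 1)) :
    r * a * (1 - m) / (m * c + r * (1 - m)) + r * m * (1 - a) / ((1 - m) / c + r * m)
        = r / (r + 1)
    ∧ (r ≠ 1 → r / (r + 1) = (1 - 1 / r) / (1 - 1 / r ^ 2))
    ∧ (r = 1 → r / (r + 1) = 1 / 2) := by
  have hc1 : (0:ℝ) < c + 1 := by positivity
  have hr1 : (0:ℝ) < r + 1 := by positivity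
  refine ⟨?_, ?_, ?_⟩
  · subst hm
    have h1m : 1 - 1 / (c + 1) = c / (c + 1) := by field_simp; ring
    rw [h1m]
    have hden1 : 1 / (c + 1) * c + r * (c / (c + 1)) ≠ 0 := by positivity
    have hden2 : c / (c + 1) / c + r * (1 / (c + 1)) ≠ 0 := by positivity
    field_simp
    ring
  · intro hne
    have h1 : r - 1 ≠ 0 := sub_ne_zero.mpr hne
    have h2 : 1 - 1 / r ^ 2 ≠ 0 := by
      intro h
      apply h1
      have hr2 : r ^ 2 = 1 := by
        field_simp at h
        nlinarith [h]
      nlinarith [sq_nonneg (r - 1), sq_nonneg (r + 1)]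
    rw [div_eq_div_iff hr1.ne' h2]
    field_simp
    ring
  · intro h; rw [h]; norm_num
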